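/- Quadratic form identity for the Hessian of J with I-divergence: with d_φ the generalized I-divergence, the Hessian H of J(y^{(l)}, y^{(r)}) satisfies z^† H z = Σ_{i=1}^n Σ_{ℓ=1}^k π_{iℓ} for the vector z = ((y_i^{(l)})_i, (y_i^{(r)})_i); consequently, if Σ_{i,ℓ} π_{iℓ} > 0, then z^† H z > 0 for this particular z. -/

import Mathlib

open scoped BigOperators
open Finset

private lemma erase_sum_swap {n : ℕ} (f : Fin n → Fin n → ℝ) :
    ∑ j, ∑ i ∈ univ.erase j, f i j = ∑ i, ∑ j ∈ univ.erase i, f i j := by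
  have h1 : ∀ j : Fin n, ∑ i ∈ univ.erase j, f i j = (∑ i, f i j) - f j j := by
    intro j; rw [Finset.sum_erase_eq_sub (Finset.mem_univ j)]
  have h2 : ∀ i : Fin n, ∑ j ∈ univ.erase i, f i j = (∑ j, f i j) - f i i := by
    intro i; rw [Finset.sum_erase_eq_sub (Finset.mem_univ i)]
  simp_rw [h1, h2, Finset.sum_sub_distrib]
  rw [Finset.sum_comm]

/-- quadratic form identity for the Hessian of `J` with the generalized
I-divergence.  Evaluating the block Hessian of `J` at `z = ((yᵢ⁽ˡ⁾)ᵢ, (yᵢ⁽ʳ⁾)ᵢ)` gives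
`zᵀ H z = Σᵢ Σ_ℓ π_{iℓ}`; consequently `zᵀ H z > 0` whenever `Σᵢ Σ_ℓ π_{iℓ} > 0`. -/
theorem hessian_quadratic_form_identity {k n : ℕ}
    (π yl yr : Fin n → Fin k → ℝ)
    (hyl : ∀ i ℓ, 0 < yl i ℓ) (hyr : ∀ i ℓ, 0 < yr i ℓ)
    (s : Fin n → Fin n → ℝ) (α lam : ℝ) :
    -- `Q = zᵀ H z`, assembled block by block from the Hessian of `J`:
    (∑ i, (α * (∑ j ∈ univ.erase i, s i j) + lam) * ∑ ℓ, yl i ℓ * (1 / yl i ℓ) * yl i ℓ)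
      + (∑ j, ∑ ℓ, yr j ℓ *
          ((π j ℓ + α * (∑ i ∈ univ.erase j, s i j * yl i ℓ) + lam * yl j ℓ) /
            (yr j ℓ) ^ 2) * yr j ℓ)
      + 2 * (∑ i, ∑ j ∈ univ.erase i, (-(α * s i j)) * ∑ ℓ, yl i ℓ * (1 / yr j ℓ) * yr j ℓ)
      + 2 * (∑ i, (-lam) * ∑ ℓ, yl i ℓ * (1 / yr i ℓ) * yr i ℓ)
      = ∑ i, ∑ ℓ, π i ℓ ∧
    ((0 < ∑ i, ∑ ℓ, π i ℓ) →
      0 < (∑ i, (α * (∑ j ∈ univ.erase i, s i j) + lam) * ∑ ℓ, yl i ℓ * (1 / yl i ℓ) * yl i ℓ)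
        + (∑ j, ∑ ℓ, yr j ℓ *
            ((π j ℓ + α * (∑ i ∈ univ.erase j, s i j * yl i ℓ) + lam * yl j ℓ) /
              (yr j ℓ) ^ 2) * yr j ℓ)
        + 2 * (∑ i, ∑ j ∈ univ.erase i, (-(α * s i j)) * ∑ ℓ, yl i ℓ * (1 / yr j ℓ) * yr j ℓ)
        + 2 * (∑ i, (-lam) * ∑ ℓ, yl i ℓ * (1 / yr i ℓ) * yr i ℓ)) := by
  have e1 : ∀ i : Fin n, ∑ ℓ, yl i ℓ * (1 / yl i ℓ) * yl i ℓ = ∑ ℓ, yl i ℓ := by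
    intro i; refine Finset.sum_congr rfl fun ℓ _ => ?_
    have h := (hyl i ℓ).ne'
    field_simp
  have e3 : ∀ i j : Fin n, ∑ ℓ, yl i ℓ * (1 / yr j ℓ) * yr j ℓ = ∑ ℓ, yl i ℓ := by
    intro i j; refine Finset.sum_congr rfl fun ℓ _ => ?_
    have h := (hyr j ℓ).ne'
    field_simp
  have e2 : ∀ (j : Fin n) (ℓ : Fin k), yr j ℓ *
      ((π j ℓ + α * (∑ i ∈ univ.erase j, s i j * yl i ℓ) + lam * yl j ℓ) /
        (yr j ℓ) ^ 2) * yr j ℓ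
      = π j ℓ + α * (∑ i ∈ univ.erase j, s i j * yl i ℓ) + lam * yl j ℓ := by
    intro j ℓ
    have h := (hyr j ℓ).ne'
    field_simp
  have key :
    (∑ i, (α * (∑ j ∈ univ.erase i, s i j) + lam) * ∑ ℓ, yl i ℓ * (1 / yl i ℓ) * yl i ℓ)
      + (∑ j, ∑ ℓ, yr j ℓ *
          ((π j ℓ + α * (∑ i ∈ univ.erase j, s i j * yl i ℓ) + lam * yl j ℓ) /
            (yr j ℓ) ^ 2) * yr j ℓ)
      + 2 * (∑ i, ∑ j ∈ univ.erase i, (-(α * s i j)) * ∑ ℓ, yl i ℓ * (1 / yr j ℓ) * yr j ℓ)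
      + 2 * (∑ i, (-lam) * ∑ ℓ, yl i ℓ * (1 / yr i ℓ) * yr i ℓ)
      = ∑ i, ∑ ℓ, π i ℓ := by
    simp_rw [e1, e2, e3]
    have hswap : ∑ j, ∑ ℓ, α * (∑ i ∈ univ.erase j, s i j * yl i ℓ)
        = ∑ i, (α * (∑ j ∈ univ.erase i, s i j)) * ∑ ℓ, yl i ℓ := by
      have step1 : ∀ j : Fin n, ∑ ℓ, α * (∑ i ∈ univ.erase j, s i j * yl i ℓ)
          = ∑ i ∈ univ.erase j, α * (s i j * ∑ ℓ, yl i ℓ) := by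
        intro j
        simp_rw [Finset.mul_sum]
        rw [Finset.sum_comm]
      simp_rw [step1]
      rw [erase_sum_swap (fun i j => α * (s i j * ∑ ℓ, yl i ℓ))]
      refine Finset.sum_congr rfl fun i _ => ?_
      simp_rw [← mul_assoc]
      rw [← Finset.sum_mul, ← Finset.mul_sum]
    have hB : ∑ i, (α * (∑ j ∈ univ.erase i, s i j) + lam) * ∑ ℓ, yl i ℓ
        = (∑ i, (α * (∑ j ∈ univ.erase i, s i j)) * ∑ ℓ, yl i ℓ)
          + lam * ∑ i, ∑ ℓ, yl i ℓ := by
      have h : ∀ i : Fin n, (α * (∑ j ∈ univ.erase i, s i j) + lam) * ∑ ℓ, yl i ℓ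
          = (α * (∑ j ∈ univ.erase i, s i j)) * (∑ ℓ, yl i ℓ) + lam * ∑ ℓ, yl i ℓ := by
        intro i; ring
      simp_rw [h, Finset.sum_add_distrib, ← Finset.mul_sum]
    have hA : ∑ j, ∑ ℓ, (π j ℓ + α * (∑ i ∈ univ.erase j, s i j * yl i ℓ) + lam * yl j ℓ)
        = (∑ j, ∑ ℓ, π j ℓ)
          + (∑ i, (α * (∑ j ∈ univ.erase i, s i j)) * ∑ ℓ, yl i ℓ)
          + lam * ∑ i, ∑ ℓ, yl i ℓ := by
      simp_rw [Finset.sum_add_distrib]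
      rw [hswap]
      simp [Finset.mul_sum]
    have hC : ∑ i, ∑ j ∈ univ.erase i, (-(α * s i j)) * ∑ ℓ, yl i ℓ
        = -∑ i, (α * (∑ j ∈ univ.erase i, s i j)) * ∑ ℓ, yl i ℓ := by
      rw [← Finset.sum_neg_distrib]
      refine Finset.sum_congr rfl fun i _ => ?_
      have h : ∀ j : Fin n, (-(α * s i j)) * ∑ ℓ, yl i ℓ = -((α * s i j) * ∑ ℓ, yl i ℓ) := by
        intro j; ring
      simp_rw [h, Finset.sum_neg_distrib]
      rw [← Finset.sum_mul, ← Finset.mul_sum]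
    have hD : ∑ i, (-lam) * ∑ ℓ, yl i ℓ = -(lam * ∑ i, ∑ ℓ, yl i ℓ) := by
      simp_rw [neg_mul, Finset.sum_neg_distrib, ← Finset.mul_sum]
    rw [hA, hB, hC, hD]
    ring
  exact ⟨key, fun h => key ▸ h⟩
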